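/- arXiv:2604.08271 — 3 statements merged into one kernel-verified Lean document; each statement's English description precedes it below -/
import Mathlib

section
/- Let K ≥ 3, let μ_1, …, μ_K in ℝ^d form a normalized simplex equiangular tight frame, and fix a forget class k ∈ {1,…,K}. Suppose the unlearned classifier weights satisfy w_k = −(1−γ) μ_k and w_c = α μ_c + β μ_k for every c ≠ k, where 0 < α < 1, 0 < β < 1, 0 < γ < 1. Then the cosine similarity of w_k with μ_k equals −1, while for every c ≠ k the cosine similarity of w_c with μ_k is strictly greater than −1. Consequently, any index c maximizing the cosine similarity of w_c with μ_k over c ∈ {1,…,K} is different from k; that is, the unlearned model achieves zero forget accuracy on class k. -/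
open RealInnerProductSpace

/-- Zero forget accuracy from the unlearned configuration: with a normalized
simplex ETF `μ_1, …, μ_K` (`K ≥ 3`), forget class `k`, and unlearned weights
`w_k = −(1−γ) μ_k`, `w_c = α μ_c + β μ_k` for `c ≠ k` (`0 < α, β, γ < 1`),
the cosine similarity of `w_k` with `μ_k` is `−1`, that of every `w_c`
(`c ≠ k`) with `μ_k` exceeds `−1`, and hence every maximizer of the cosine
similarity with `μ_k` differs from `k`. -/
theorem zero_forget_accuracy {d K : ℕ} (hK : 3 ≤ K)
    (μ : Fin K → EuclideanSpace ℝ (Fin d))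
    (hnorm : ∀ j, ‖μ j‖ = 1)
    (hangle : ∀ i j, i ≠ j → ⟪μ i, μ j⟫ = -1 / ((K : ℝ) - 1))
    (k : Fin K) (w : Fin K → EuclideanSpace ℝ (Fin d))
    (α β γ : ℝ) (hα : 0 < α ∧ α < 1) (hβ : 0 < β ∧ β < 1) (hγ : 0 < γ ∧ γ < 1)
    (hwk : w k = (-(1 - γ)) • μ k)
    (hwc : ∀ c, c ≠ k → w c = α • μ c + β • μ k) :
    ⟪w k, μ k⟫ / (‖w k‖ * ‖μ k‖) = -1 ∧
    (∀ c, c ≠ k → -1 < ⟪w c, μ k⟫ / (‖w c‖ * ‖μ k‖)) ∧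
    (∀ c : Fin K,
      (∀ c' : Fin K, ⟪w c', μ k⟫ / (‖w c'‖ * ‖μ k‖)
          ≤ ⟪w c, μ k⟫ / (‖w c‖ * ‖μ k‖)) → c ≠ k) := by
  obtain ⟨hα0, hα1⟩ := hα
  obtain ⟨hβ0, hβ1⟩ := hβ
  obtain ⟨hγ0, hγ1⟩ := hγ
  have hK2 : (2 : ℝ) ≤ (K : ℝ) - 1 := by
    have : (3 : ℝ) ≤ (K : ℝ) := by exact_mod_cast hK
    linarith
  have hKpos : (0 : ℝ) < (K : ℝ) - 1 := by linarith
  have hself : ∀ j, ⟪μ j, μ j⟫ = 1 := by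
    intro j
    rw [real_inner_self_eq_norm_sq, hnorm j]; ring
  -- part 1
  have h1 : ⟪w k, μ k⟫ / (‖w k‖ * ‖μ k‖) = -1 := by
    have hin : ⟪w k, μ k⟫ = -(1 - γ) := by
      rw [hwk, real_inner_smul_left, hself]; ring
    have hnk : ‖w k‖ = 1 - γ := by
      rw [hwk, norm_smul, hnorm, mul_one, Real.norm_eq_abs,
        abs_of_nonpos (by linarith : -(1 - γ) ≤ 0)]
      ring
    rw [hin, hnk, hnorm, mul_one, div_eq_iff (by linarith : (1:ℝ) - γ ≠ 0)]
    ring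
  -- part 2
  have h2 : ∀ c, c ≠ k → -1 < ⟪w c, μ k⟫ / (‖w c‖ * ‖μ k‖) := by
    intro c hc
    have hin : ⟪w c, μ k⟫ = β - α / ((K : ℝ) - 1) := by
      rw [hwc c hc, inner_add_left, real_inner_smul_left, real_inner_smul_left,
        hself, hangle c k hc]
      field_simp
      ring
    have hnsq : ‖w c‖ ^ 2 = α ^ 2 + β ^ 2 - 2 * α * β / ((K : ℝ) - 1) := by
      rw [← real_inner_self_eq_norm_sq, hwc c hc]
      rw [inner_add_left, inner_add_right, inner_add_right,
        real_inner_smul_left, real_inner_smul_left, real_inner_smul_left,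
        real_inner_smul_left, real_inner_smul_right, real_inner_smul_right,
        real_inner_smul_right, real_inner_smul_right,
        hself, hself, hangle c k hc, hangle k c (Ne.symm hc)]
      field_simp; ring
    have hgap : ⟪w c, μ k⟫ ^ 2 < ‖w c‖ ^ 2 := by
      rw [hin, hnsq]
      have h2' : 0 < α / ((K : ℝ) - 1) := div_pos hα0 hKpos
      have h1' : α / ((K : ℝ) - 1) < α := by
        rw [div_lt_iff₀ hKpos]; nlinarith
      have h3 : 2 * α * β / ((K:ℝ)-1) = 2 * (α / ((K:ℝ)-1)) * β := by ring
      rw [h3]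
      set t := α / ((K:ℝ)-1)
      nlinarith [mul_lt_mul'' h1' h1' h2'.le h2'.le]
    have hwpos : 0 < ‖w c‖ := by
      by_contra h
      push_neg at h
      have : ‖w c‖ = 0 := le_antisymm h (norm_nonneg _)
      rw [this] at hgap
      nlinarith [sq_nonneg (⟪w c, μ k⟫)]
    have hlt : -‖w c‖ < ⟪w c, μ k⟫ := by nlinarith
    rw [hnorm, mul_one]
    rw [lt_div_iff₀ hwpos]
    linarith
  refine ⟨h1, h2, ?_⟩
  intro c hmax
  have : ∃ c' : Fin K, c' ≠ k := by
    haveI : Nontrivial (Fin K) := Fin.nontrivial_iff_two_le.mpr (by omega)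
    exact exists_ne k
  obtain ⟨c', hc'⟩ := this
  intro hck
  have := hmax c'
  rw [hck, h1] at this
  exact absurd this (not_le.mpr (h2 c' hc'))
end

section
/- Let K ≥ 3, let z ∈ ℝ^K, let i ≠ k be two indices in {1,…,K}, let λ₁ > 0, and set S = Σ_{l=1}^K exp(z_l). If the stationarity conditions exp(z_j)/S + λ₁ z_j = 0 hold for every index j with j ≠ i and j ≠ k, then z_j = z_l for all indices j, l with j, l ∉ {i, k}. -/
/-- KKT lemma, `z`-part: if `K ≥ 3`, `i ≠ k`, `λ₁ > 0`, and the stationarity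
conditions `exp(z_j)/S + λ₁ z_j = 0` hold for every `j ∉ {i, k}`, where
`S = ∑_l exp(z_l)`, then all coordinates `z_j` with `j ∉ {i, k}` are equal. -/
theorem kkt_z_coords_eq {K : ℕ} (hK : 3 ≤ K) (z : Fin K → ℝ)
    (i k : Fin K) (hik : i ≠ k) (lam₁ : ℝ) (hlam : 0 < lam₁)
    (hstat : ∀ j, j ≠ i → j ≠ k →
      Real.exp (z j) / (∑ l, Real.exp (z l)) + lam₁ * z j = 0) :
    ∀ j l, j ≠ i → j ≠ k → l ≠ i → l ≠ k → z j = z l := by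
  intro j l hji hjk hli hlk
  set S : ℝ := ∑ m, Real.exp (z m) with hSdef
  have hS : 0 < S := Finset.sum_pos (fun m _ => Real.exp_pos _) ⟨i, Finset.mem_univ i⟩
  have hg : StrictMono (fun x : ℝ => Real.exp x / S + lam₁ * x) :=
    (Real.exp_strictMono.div_const hS).add (strictMono_mul_left_of_pos hlam)
  exact hg.injective ((hstat j hji hjk).trans (hstat l hli hlk).symm)
end

section
/- Let K ≥ 2, let z' ∈ ℝ^K, let k be an index in {1,…,K}, let λ₂ < 0, and set S' = Σ_{l=1}^K exp(z'_l). If the stationarity conditions −exp(z'_j)/S' + λ₂ z'_j = 0 hold for every index j ≠ k, then z'_j = z'_l for all indices j, l with j ≠ k and l ≠ k. -/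
/-- KKT lemma, `z'`-part: if `K ≥ 2`, `λ₂ < 0`, and the stationarity conditions
`−exp(z'_j)/S' + λ₂ z'_j = 0` hold for every `j ≠ k`, where
`S' = ∑_l exp(z'_l)`, then all coordinates `z'_j` with `j ≠ k` are equal. -/
theorem kkt_z'_coords_eq {K : ℕ} (hK : 2 ≤ K) (z' : Fin K → ℝ)
    (k : Fin K) (lam₂ : ℝ) (hlam : lam₂ < 0)
    (hstat : ∀ j, j ≠ k →
      -(Real.exp (z' j) / (∑ l, Real.exp (z' l))) + lam₂ * z' j = 0) :
    ∀ j l, j ≠ k → l ≠ k → z' j = z' l := by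
  set S : ℝ := ∑ l, Real.exp (z' l) with hS
  have hSpos : 0 < S := Finset.sum_pos (fun i _ => Real.exp_pos _) ⟨k, Finset.mem_univ k⟩
  set c : ℝ := lam₂ * S with hc
  have hcneg : c < 0 := mul_neg_of_neg_of_pos hlam hSpos
  have key : ∀ j, j ≠ k → Real.exp (z' j) = c * z' j := by
    intro j hj
    have h := hstat j hj
    have : Real.exp (z' j) / S = lam₂ * z' j := by linarith
    field_simp at this
    rw [this]; ring
  have hmono : StrictMono (fun x : ℝ => Real.exp x - c * x) := by
    have h1 : StrictMono (fun x : ℝ => Real.exp x) := Real.exp_strictMono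
    have h2 : StrictMono (fun x : ℝ => (-c) * x) :=
      strictMono_mul_left_of_pos (neg_pos.mpr hcneg)
    have := h1.add h2
    convert this using 2 with x
    ring
  intro j l hj hl
  have hj' := key j hj
  have hl' := key l hl
  have : Real.exp (z' j) - c * z' j = Real.exp (z' l) - c * z' l := by
    rw [hj', hl']; ring
  exact hmono.injective this
end
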